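/- Let X be a measurable space, let κ₁ and κ₂ be Markov kernels from X to X, let μ be a probability measure on X, let R : X → ℝ be measurable with |R(x)| ≤ R_max for all x (R_max ≥ 0), and let δ ≥ 0 be such that for every probability measure ν on X, ‖νκ₁ − νκ₂‖_TV ≤ δ. For H ∈ ℕ define J_i := Σ_{t=0}^{H−1} ∫ R d(μκ_i^t) for i = 1, 2. Then |J₁ − J₂| ≤ R_max · (H(H−1)/2) · δ. -/

import Mathlib

open MeasureTheory ProbabilityTheory

/-- Pushing a finite measure through a Markov kernel yields a finite measure. -/
instance bindIsFiniteMeasure {X : Type*} [MeasurableSpace X] (μ : Measure X)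
    [IsFiniteMeasure μ] (κ : Kernel X X) [IsMarkovKernel κ] :
    IsFiniteMeasure (μ.bind κ) := by
  constructor
  rw [Measure.bind_apply MeasurableSet.univ (Kernel.measurable κ).aemeasurable]
  calc ∫⁻ x, (κ x) Set.univ ∂μ = ∫⁻ _, 1 ∂μ := by simp
    _ = μ Set.univ := by simp
    _ < ⊤ := measure_lt_top μ _

/-- The `t`-fold iterated bind `μ κ^t` of a measure `μ` along a kernel `κ`:
`μκ^0 = μ` and `μκ^(t+1) = (μκ^t)κ`. -/
noncomputable def iterBind {X : Type*} [MeasurableSpace X] (μ : Measure X)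
    (κ : Kernel X X) : ℕ → Measure X
  | 0 => μ
  | t + 1 => (iterBind μ κ t).bind κ

instance iterBindIsFiniteMeasure {X : Type*} [MeasurableSpace X] (μ : Measure X)
    [IsFiniteMeasure μ] (κ : Kernel X X) [IsMarkovKernel κ] (t : ℕ) :
    IsFiniteMeasure (iterBind μ κ t) := by
  induction t with
  | zero => exact inferInstanceAs (IsFiniteMeasure μ)
  | succ t ih => exact @bindIsFiniteMeasure X _ (iterBind μ κ t) ih κ _

/-- The total variation norm `‖μ − ν‖_TV` of the difference of two finite measures:
the total mass of the total variation of the signed measure `μ − ν`. -/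
noncomputable def tvDist {X : Type*} [MeasurableSpace X] (μ ν : Measure X)
    [IsFiniteMeasure μ] [IsFiniteMeasure ν] : ℝ :=
  ((μ.toSignedMeasure - ν.toSignedMeasure).totalVariation Set.univ).toReal

section Aux

variable {X : Type*} [MeasurableSpace X]

instance bindIsProbabilityMeasure (μ : Measure X) [IsProbabilityMeasure μ]
    (κ : Kernel X X) [IsMarkovKernel κ] : IsProbabilityMeasure (μ.bind κ) := by
  constructor
  rw [Measure.bind_apply MeasurableSet.univ (Kernel.measurable κ).aemeasurable]
  simp

instance iterBindIsProbabilityMeasure (μ : Measure X) [IsProbabilityMeasure μ]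
    (κ : Kernel X X) [IsMarkovKernel κ] (t : ℕ) :
    IsProbabilityMeasure (iterBind μ κ t) := by
  induction t with
  | zero => exact inferInstanceAs (IsProbabilityMeasure μ)
  | succ t ih => exact @bindIsProbabilityMeasure X _ (iterBind μ κ t) ih κ _

lemma bind_univ_eq (p : Measure X) (κ : Kernel X X) [IsMarkovKernel κ] :
    (p.bind κ) Set.univ = p Set.univ := by
  rw [Measure.bind_apply MeasurableSet.univ (Kernel.measurable κ).aemeasurable]
  simp

/-- Key estimate: if `μ − ν = a − b` as signed measures, then the total variation
distance of `μ` and `ν` is at most the total mass of `a` plus that of `b`. -/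
lemma tvDist_le_of_eq_sub (μ ν a b : Measure X)
    [IsFiniteMeasure μ] [IsFiniteMeasure ν] [IsFiniteMeasure a] [IsFiniteMeasure b]
    (h : μ.toSignedMeasure - ν.toSignedMeasure = a.toSignedMeasure - b.toSignedMeasure) :
    tvDist μ ν ≤ (a Set.univ).toReal + (b Set.univ).toReal := by
  set s : SignedMeasure X := μ.toSignedMeasure - ν.toSignedMeasure with hsdef
  obtain ⟨i, hi₁, hi₂, hi₃, hp, hn⟩ := s.toJordanDecomposition_spec
  have hsapp : ∀ j : Set X, MeasurableSet j → s j = (a j).toReal - (b j).toReal := by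
    intro j hj
    rw [h, VectorMeasure.sub_apply, Measure.toSignedMeasure_apply_measurable hj,
      Measure.toSignedMeasure_apply_measurable hj]
    rfl
  have hps : (s.toJordanDecomposition.posPart Set.univ).toReal = s i := by
    rw [hp, SignedMeasure.toMeasureOfZeroLE_apply _ hi₂ hi₁ MeasurableSet.univ]
    simp
  have hns : (s.toJordanDecomposition.negPart Set.univ).toReal = -s iᶜ := by
    rw [hn, SignedMeasure.toMeasureOfLEZero_apply _ hi₃ hi₁.compl MeasurableSet.univ]
    simp
  have h1 : s i ≤ (a Set.univ).toReal := by
    rw [hsapp i hi₁]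
    have : (a i).toReal ≤ (a Set.univ).toReal :=
      ENNReal.toReal_mono (measure_ne_top a _) (measure_mono (Set.subset_univ i))
    have hb : 0 ≤ (b i).toReal := ENNReal.toReal_nonneg
    linarith
  have h2 : -s iᶜ ≤ (b Set.univ).toReal := by
    rw [hsapp iᶜ hi₁.compl]
    have : (b iᶜ).toReal ≤ (b Set.univ).toReal :=
      ENNReal.toReal_mono (measure_ne_top b _) (measure_mono (Set.subset_univ iᶜ))
    have ha : 0 ≤ (a iᶜ).toReal := ENNReal.toReal_nonneg
    linarith
  have htv : tvDist μ ν = (s.toJordanDecomposition.posPart Set.univ).toReal +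
      (s.toJordanDecomposition.negPart Set.univ).toReal := by
    rw [tvDist, ← hsdef, SignedMeasure.totalVariation, Measure.add_apply,
      ENNReal.toReal_add (measure_ne_top _ _) (measure_ne_top _ _)]
  rw [htv, hps, hns]
  linarith

/-- The Jordan-type decomposition of the difference of two finite measures, with the
value of the total variation distance. -/
lemma tvDist_spec (μ ν : Measure X) [IsFiniteMeasure μ] [IsFiniteMeasure ν] :
    ∃ (p n : Measure X) (_ : IsFiniteMeasure p) (_ : IsFiniteMeasure n),
      μ.toSignedMeasure - ν.toSignedMeasure = p.toSignedMeasure - n.toSignedMeasure ∧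
      tvDist μ ν = (p Set.univ).toReal + (n Set.univ).toReal ∧
      μ + n = ν + p := by
  set s : SignedMeasure X := μ.toSignedMeasure - ν.toSignedMeasure with hsdef
  refine ⟨s.toJordanDecomposition.posPart, s.toJordanDecomposition.negPart,
    s.toJordanDecomposition.posPart_finite, s.toJordanDecomposition.negPart_finite, ?_, ?_, ?_⟩
  case _ =>
    have hthis : s.toJordanDecomposition.toSignedMeasure = s :=
      s.toSignedMeasure_toJordanDecomposition
    rw [JordanDecomposition.toSignedMeasure] at hthis
    exact hthis.symm
  case _ =>
    rw [tvDist, ← hsdef, SignedMeasure.totalVariation, Measure.add_apply,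
      ENNReal.toReal_add (measure_ne_top _ _) (measure_ne_top _ _)]
  case _ =>
    have hdec : s = s.toJordanDecomposition.posPart.toSignedMeasure -
        s.toJordanDecomposition.negPart.toSignedMeasure := by
      have hthis : s.toJordanDecomposition.toSignedMeasure = s :=
        s.toSignedMeasure_toJordanDecomposition
      rw [JordanDecomposition.toSignedMeasure] at hthis
      exact hthis.symm
    ext E hE
    have h0 : (μ.toSignedMeasure - ν.toSignedMeasure) E =
        (s.toJordanDecomposition.posPart.toSignedMeasure -
          s.toJordanDecomposition.negPart.toSignedMeasure) E := by
      rw [← hsdef, ← hdec]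
    rw [VectorMeasure.sub_apply, VectorMeasure.sub_apply,
      Measure.toSignedMeasure_apply_measurable hE, Measure.toSignedMeasure_apply_measurable hE,
      Measure.toSignedMeasure_apply_measurable hE, Measure.toSignedMeasure_apply_measurable hE]
      at h0
    have hr : ((μ + s.toJordanDecomposition.negPart) E).toReal =
        ((ν + s.toJordanDecomposition.posPart) E).toReal := by
      rw [Measure.add_apply, Measure.add_apply,
        ENNReal.toReal_add (measure_ne_top _ _) (measure_ne_top _ _),
        ENNReal.toReal_add (measure_ne_top _ _) (measure_ne_top _ _)]
      simp only [measureReal_def] at h0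
      linarith
    exact (ENNReal.toReal_eq_toReal_iff' (measure_ne_top _ _) (measure_ne_top _ _)).mp hr

lemma tvDist_self (μ : Measure X) [IsFiniteMeasure μ] : tvDist μ μ = 0 := by
  rw [tvDist, sub_self, SignedMeasure.totalVariation_zero]
  simp

lemma tvDist_triangle (μ ν ξ : Measure X)
    [IsFiniteMeasure μ] [IsFiniteMeasure ν] [IsFiniteMeasure ξ] :
    tvDist μ ξ ≤ tvDist μ ν + tvDist ν ξ := by
  obtain ⟨p₁, n₁, h₁p, h₁n, heq₁, hval₁, -⟩ := tvDist_spec μ ν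
  obtain ⟨p₂, n₂, h₂p, h₂n, heq₂, hval₂, -⟩ := tvDist_spec ν ξ
  have heq : μ.toSignedMeasure - ξ.toSignedMeasure =
      (p₁ + p₂).toSignedMeasure - (n₁ + n₂).toSignedMeasure := by
    rw [Measure.toSignedMeasure_add, Measure.toSignedMeasure_add]
    have : μ.toSignedMeasure - ξ.toSignedMeasure =
        (μ.toSignedMeasure - ν.toSignedMeasure) + (ν.toSignedMeasure - ξ.toSignedMeasure) := by
      abel
    rw [this, heq₁, heq₂]; abel
  have hle := tvDist_le_of_eq_sub μ ξ (p₁ + p₂) (n₁ + n₂) heq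
  rw [Measure.add_apply, Measure.add_apply,
    ENNReal.toReal_add (measure_ne_top _ _) (measure_ne_top _ _),
    ENNReal.toReal_add (measure_ne_top _ _) (measure_ne_top _ _)] at hle
  rw [hval₁, hval₂]
  linarith

/-- Pushing forward through a Markov kernel contracts total variation distance. -/
lemma tvDist_bind_le (a b : Measure X) [IsFiniteMeasure a] [IsFiniteMeasure b]
    (κ : Kernel X X) [IsMarkovKernel κ] :
    tvDist (a.bind κ) (b.bind κ) ≤ tvDist a b := by
  obtain ⟨p, n, hp, hn, heq, hval, hsum⟩ := tvDist_spec a b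
  have hbind : a.bind κ + n.bind κ = b.bind κ + p.bind κ := by
    rw [← Measure.comp_add, ← Measure.comp_add, hsum]
  have heq' : (a.bind κ).toSignedMeasure - (b.bind κ).toSignedMeasure =
      (p.bind κ).toSignedMeasure - (n.bind κ).toSignedMeasure := by
    rw [sub_eq_sub_iff_add_eq_add, ← Measure.toSignedMeasure_add, ← Measure.toSignedMeasure_add]
    exact Measure.toSignedMeasure_congr (hbind.trans (add_comm _ _))
  have hle := tvDist_le_of_eq_sub (a.bind κ) (b.bind κ) (p.bind κ) (n.bind κ) heq'
  rwa [bind_univ_eq, bind_univ_eq, ← hval] at hle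

/-- The difference of integrals of a bounded function is controlled by total variation. -/
lemma abs_integral_sub_le_tvDist (μ ν : Measure X) [IsFiniteMeasure μ] [IsFiniteMeasure ν]
    (R : X → ℝ) (hR : Measurable R) (Rmax : ℝ) (hbound : ∀ x, |R x| ≤ Rmax) :
    |(∫ x, R x ∂μ) - ∫ x, R x ∂ν| ≤ Rmax * tvDist μ ν := by
  have hint : ∀ (m : Measure X) [IsFiniteMeasure m], Integrable R m := by
    intro m _
    refine (integrable_const Rmax).mono' hR.aestronglyMeasurable (ae_of_all _ fun x => ?_)
    simpa [Real.norm_eq_abs] using hbound x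
  obtain ⟨p, n, hp, hn, heq, hval, hsum⟩ := tvDist_spec μ ν
  have hI : (∫ x, R x ∂μ) + ∫ x, R x ∂n = (∫ x, R x ∂ν) + ∫ x, R x ∂p := by
    rw [← integral_add_measure (hint μ) (hint n), ← integral_add_measure (hint ν) (hint p), hsum]
  have hbd : ∀ (m : Measure X) [IsFiniteMeasure m],
      |∫ x, R x ∂m| ≤ Rmax * (m Set.univ).toReal := by
    intro m _
    have hA : |∫ x, R x ∂m| ≤ ∫ x, |R x| ∂m := by
      simpa [Real.norm_eq_abs] using norm_integral_le_integral_norm (μ := m) R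
    have hB : (∫ x, |R x| ∂m) ≤ ∫ _, Rmax ∂m :=
      integral_mono (hint m).abs (integrable_const Rmax) fun x => hbound x
    have hC : (∫ (_ : X), Rmax ∂m) = (m Set.univ).toReal * Rmax := by
      simp [integral_const, smul_eq_mul, measureReal_def]
    rw [mul_comm]
    linarith
  have h1 := hbd p
  have h2 := hbd n
  rw [hval]
  rw [abs_le] at h1 h2 ⊢
  constructor <;> nlinarith [h1.1, h1.2, h2.1, h2.2]

end Aux

/-- **Theorem 2 of the paper, total-variation form.** If the one-step
total variation discrepancy between two Markov kernels `κ₁`, `κ₂` is uniformly bounded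
by `δ` over all initial probability measures, and `R` is a measurable reward bounded in
absolute value by `Rmax ≥ 0`, then the `H`-step expected cumulative rewards
`Jᵢ = ∑_{t=0}^{H−1} ∫ R d(μκᵢ^t)` satisfy `|J₁ − J₂| ≤ Rmax · (H(H−1)/2) · δ`. -/
theorem abs_return_sub_return_le {X : Type*} [MeasurableSpace X]
    (κ₁ κ₂ : Kernel X X) [IsMarkovKernel κ₁] [IsMarkovKernel κ₂]
    (μ : Measure X) [IsProbabilityMeasure μ]
    (R : X → ℝ) (hR : Measurable R) (Rmax : ℝ) (hRmax : 0 ≤ Rmax)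
    (hbound : ∀ x, |R x| ≤ Rmax)
    (δ : ℝ) (hδ : 0 ≤ δ)
    (hstep : ∀ (ν : Measure X) [IsProbabilityMeasure ν],
      tvDist (ν.bind κ₁) (ν.bind κ₂) ≤ δ)
    (H : ℕ) :
    |(∑ t ∈ Finset.range H, ∫ x, R x ∂(iterBind μ κ₁ t)) -
        (∑ t ∈ Finset.range H, ∫ x, R x ∂(iterBind μ κ₂ t))|
      ≤ Rmax * ((H * (H - 1) / 2 : ℝ)) * δ := by
  have hkey : ∀ t : ℕ, tvDist (iterBind μ κ₁ t) (iterBind μ κ₂ t) ≤ t * δ := by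
    intro t
    induction t with
    | zero => simp [iterBind, tvDist_self]
    | succ t ih =>
      have h1 : tvDist (iterBind μ κ₁ (t + 1)) (iterBind μ κ₂ (t + 1)) ≤
          tvDist ((iterBind μ κ₁ t).bind κ₁) ((iterBind μ κ₁ t).bind κ₂) +
          tvDist ((iterBind μ κ₁ t).bind κ₂) ((iterBind μ κ₂ t).bind κ₂) := by
        exact tvDist_triangle _ _ _
      have h2 : tvDist ((iterBind μ κ₁ t).bind κ₁) ((iterBind μ κ₁ t).bind κ₂) ≤ δ :=
        hstep (iterBind μ κ₁ t)
      have h3 : tvDist ((iterBind μ κ₁ t).bind κ₂) ((iterBind μ κ₂ t).bind κ₂) ≤ t * δ :=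
        le_trans (tvDist_bind_le _ _ κ₂) ih
      have : tvDist (iterBind μ κ₁ (t + 1)) (iterBind μ κ₂ (t + 1)) ≤ δ + t * δ := by
        linarith
      calc tvDist (iterBind μ κ₁ (t + 1)) (iterBind μ κ₂ (t + 1)) ≤ δ + t * δ := this
        _ = (t + 1 : ℕ) * δ := by push_cast; ring
  have hterm : ∀ t : ℕ, |(∫ x, R x ∂(iterBind μ κ₁ t)) - ∫ x, R x ∂(iterBind μ κ₂ t)| ≤
      Rmax * (t * δ) := by
    intro t
    calc |(∫ x, R x ∂(iterBind μ κ₁ t)) - ∫ x, R x ∂(iterBind μ κ₂ t)|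
        ≤ Rmax * tvDist (iterBind μ κ₁ t) (iterBind μ κ₂ t) :=
          abs_integral_sub_le_tvDist _ _ R hR Rmax hbound
      _ ≤ Rmax * (t * δ) := mul_le_mul_of_nonneg_left (hkey t) hRmax
  have hsum : ∑ t ∈ Finset.range H, (t : ℝ) = (H : ℝ) * ((H : ℝ) - 1) / 2 := by
    cases H with
    | zero => simp
    | succ m =>
      have h2 : (∑ t ∈ Finset.range (m + 1), t) * 2 = (m + 1) * m := by
        simpa using Finset.sum_range_id_mul_two (m + 1)
      have h3 : (∑ t ∈ Finset.range (m + 1), (t : ℝ)) * 2 = ((m : ℝ) + 1) * m := by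
        have h4 := congrArg (Nat.cast (R := ℝ)) h2
        push_cast at h4
        exact h4
      push_cast
      linarith
  calc |(∑ t ∈ Finset.range H, ∫ x, R x ∂(iterBind μ κ₁ t)) -
        ∑ t ∈ Finset.range H, ∫ x, R x ∂(iterBind μ κ₂ t)|
      = |∑ t ∈ Finset.range H,
          ((∫ x, R x ∂(iterBind μ κ₁ t)) - ∫ x, R x ∂(iterBind μ κ₂ t))| := by
        rw [Finset.sum_sub_distrib]
    _ ≤ ∑ t ∈ Finset.range H,
          |(∫ x, R x ∂(iterBind μ κ₁ t)) - ∫ x, R x ∂(iterBind μ κ₂ t)| :=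
        Finset.abs_sum_le_sum_abs _ _
    _ ≤ ∑ t ∈ Finset.range H, Rmax * ((t : ℝ) * δ) :=
        Finset.sum_le_sum fun t _ => hterm t
    _ = Rmax * (∑ t ∈ Finset.range H, (t : ℝ)) * δ := by
        rw [Finset.mul_sum, Finset.sum_mul]
        exact Finset.sum_congr rfl fun t _ => by ring
    _ = Rmax * ((H * (H - 1) / 2 : ℝ)) * δ := by rw [hsum]
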